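/- For vectors v in ℝ^n not in the span of the all-ones vector, the map ρ_v(L) = v^T L^† v (where L^† is the Moore–Penrose pseudoinverse) is a homogeneous systemic measure of order -1 on Laplacians of connected graphs: ρ_v(κL) = κ^{-1} ρ_v(L) for κ > 0, and L1 ⪯ L2 implies ρ_v(L2) ≤ ρ_v(L1). -/

import Mathlib

open Matrix

/-- `B` is the Moore–Penrose pseudoinverse of `A`. -/
def IsMPInv {n : ℕ} (A B : Matrix (Fin n) (Fin n) ℝ) : Prop :=
  A * B * A = A ∧ B * A * B = B ∧ (A * B)ᵀ = A * B ∧ (B * A)ᵀ = B * A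

lemma symm_dot {n : ℕ} {A : Matrix (Fin n) (Fin n) ℝ} (hA : Aᵀ = A) (x y : Fin n → ℝ) :
    x ⬝ᵥ A.mulVec y = A.mulVec x ⬝ᵥ y := by
  rw [Matrix.dotProduct_mulVec, ← Matrix.mulVec_transpose, hA]

lemma mp_unique {n : ℕ} {A B C : Matrix (Fin n) (Fin n) ℝ}
    (hB : IsMPInv A B) (hC : IsMPInv A C) : B = C := by
  obtain ⟨b1, b2, b3, b4⟩ := hB
  obtain ⟨c1, c2, c3, c4⟩ := hC
  have hAB : A * B = A * C := by
    calc A * B = ((A * C) * A) * B := by rw [c1]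
      _ = (A * C) * (A * B) := by rw [mul_assoc (A * C)]
      _ = (A * C)ᵀ * (A * B)ᵀ := by rw [c3, b3]
      _ = ((A * B) * (A * C))ᵀ := by rw [← transpose_mul]
      _ = ((A * B * A) * C)ᵀ := by rw [mul_assoc (A * B) A C]
      _ = (A * C)ᵀ := by rw [b1]
      _ = A * C := c3
  have hBA : B * A = C * A := by
    calc B * A = B * ((A * C) * A) := by rw [c1]
      _ = (B * A) * (C * A) := by rw [show B * ((A * C) * A) = (B * A) * (C * A) by
            noncomm_ring]
      _ = (B * A)ᵀ * (C * A)ᵀ := by rw [b4, c4]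
      _ = ((C * A) * (B * A))ᵀ := by rw [← transpose_mul]
      _ = (C * (A * B * A))ᵀ := by rw [show (C * A) * (B * A) = C * (A * B * A) by
            noncomm_ring]
      _ = (C * A)ᵀ := by rw [b1]
      _ = C * A := c4
  calc B = B * A * B := b2.symm
    _ = B * (A * C) := by rw [mul_assoc, hAB]
    _ = (B * A) * C := by rw [mul_assoc]
    _ = (C * A) * C := by rw [hBA]
    _ = C := c2

lemma mp_symm {n : ℕ} {A B : Matrix (Fin n) (Fin n) ℝ}
    (hA : Aᵀ = A) (hB : IsMPInv A B) : Bᵀ = B := by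
  obtain ⟨b1, b2, b3, b4⟩ := hB
  have hBt : IsMPInv A Bᵀ := by
    refine ⟨?_, ?_, ?_, ?_⟩
    · calc A * Bᵀ * A = (Aᵀ * B * Aᵀ)ᵀ := by simp [transpose_mul, mul_assoc]
        _ = (A * B * A)ᵀ := by rw [hA]
        _ = Aᵀ := by rw [b1]
        _ = A := hA
    · calc Bᵀ * A * Bᵀ = (B * Aᵀ * B)ᵀ := by simp [transpose_mul, mul_assoc]
        _ = (B * A * B)ᵀ := by rw [hA]
        _ = Bᵀ := by rw [b2]
    · calc (A * Bᵀ)ᵀ = B * Aᵀ := by rw [transpose_mul, transpose_transpose]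
        _ = B * A := by rw [hA]
        _ = (B * A)ᵀ := b4.symm
        _ = Aᵀ * Bᵀ := by rw [transpose_mul]
        _ = A * Bᵀ := by rw [hA]
    · calc (Bᵀ * A)ᵀ = Aᵀ * B := by rw [transpose_mul, transpose_transpose]
        _ = A * B := by rw [hA]
        _ = (A * B)ᵀ := b3.symm
        _ = Bᵀ * Aᵀ := by rw [transpose_mul]
        _ = Bᵀ * A := by rw [hA]
  exact (mp_unique hBt ⟨b1, b2, b3, b4⟩)

lemma mp_mono {n : ℕ} (hn : 0 < n) (A B Ad Bd : Matrix (Fin n) (Fin n) ℝ)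
    (hAsym : Aᵀ = A) (hBsym : Bᵀ = B) (hApsd : A.PosSemidef)
    (hAone : A.mulVec (fun _ => 1) = 0) (hBone : B.mulVec (fun _ => 1) = 0)
    (hAker : ∀ x, A.mulVec x = 0 → ∃ c : ℝ, x = fun _ => c)
    (hAd : IsMPInv A Ad) (hBd : IsMPInv B Bd)
    (hord : (B - A).PosSemidef) (v : Fin n → ℝ) :
    v ⬝ᵥ Bd.mulVec v ≤ v ⬝ᵥ Ad.mulVec v := by
  have hAds : Adᵀ = Ad := mp_symm hAsym hAd
  have hBds : Bdᵀ = Bd := mp_symm hBsym hBd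
  obtain ⟨y, hy⟩ : ∃ y, y = Bd.mulVec v := ⟨_, rfl⟩
  obtain ⟨p, hp⟩ : ∃ p, p = Ad.mulVec v := ⟨_, rfl⟩
  -- y is a fixed point of Bd*B
  have hyfix : (Bd * B).mulVec y = y := by
    rw [hy, mulVec_mulVec, hBd.2.1]
  -- 𝟙 ⬝ y = 0
  have hones_y : (fun _ => (1:ℝ)) ⬝ᵥ y = 0 := by
    rw [← hyfix, symm_dot hBd.2.2.2, ← mulVec_mulVec, hBone]
    simp
  -- (Ad*A) y = y
  have hQy : (Ad * A).mulVec y = y := by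
    have hz : A.mulVec (y - (Ad * A).mulVec y) = 0 := by
      rw [mulVec_sub, mulVec_mulVec, ← Matrix.mul_assoc, hAd.1, sub_self]
    obtain ⟨c, hc⟩ := hAker _ hz
    have hdot : (fun _ => (1:ℝ)) ⬝ᵥ (y - (Ad * A).mulVec y) = 0 := by
      rw [dotProduct_sub, hones_y, symm_dot hAd.2.2.2, ← mulVec_mulVec, hAone]
      simp
    rw [hc] at hdot
    have hcn : (n : ℝ) * c = 0 := by
      simpa [dotProduct, Finset.sum_const, nsmul_eq_mul, mul_comm] using hdot
    have hc0 : c = 0 := by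
      have hne : (n : ℝ) ≠ 0 := Nat.cast_ne_zero.mpr hn.ne'
      exact (mul_eq_zero.mp hcn).resolve_left hne
    have hzz : y - (Ad * A).mulVec y = 0 := by rw [hc, hc0]; funext i; simp
    exact (sub_eq_zero.mp hzz).symm
  -- A*Ad = Ad*A
  have hcomm : A * Ad = Ad * A := by
    rw [← hAd.2.2.1, transpose_mul, hAds, hAsym]
  have f1 : y ⬝ᵥ B.mulVec y = v ⬝ᵥ y := by
    rw [hy, ← symm_dot hBds v, mulVec_mulVec, mulVec_mulVec, hBd.2.1]
  have hyAy : y ⬝ᵥ A.mulVec y ≤ v ⬝ᵥ y := by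
    have h0 := hord.dotProduct_mulVec_nonneg y
    simp only [star_trivial] at h0
    rw [sub_mulVec, dotProduct_sub] at h0
    linarith [f1]
  have hyAp : y ⬝ᵥ A.mulVec p = v ⬝ᵥ y := by
    rw [hp, mulVec_mulVec, hcomm, symm_dot hAd.2.2.2, hQy, dotProduct_comm]
  have hpAy : p ⬝ᵥ A.mulVec y = v ⬝ᵥ y := by
    rw [hp, ← symm_dot hAds v, mulVec_mulVec, hQy]
  have hpAp : p ⬝ᵥ A.mulVec p = v ⬝ᵥ p := by
    rw [hp, ← symm_dot hAds v, mulVec_mulVec, mulVec_mulVec, hAd.2.1]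
  have hkey := hApsd.dotProduct_mulVec_nonneg (y - p)
  simp only [star_trivial] at hkey
  rw [mulVec_sub, sub_dotProduct, dotProduct_sub, dotProduct_sub, hyAp, hpAy, hpAp] at hkey
  rw [← hy, ← hp]
  linarith

/-- For `v ∉ span{𝟙}`, the map `ρ_v(L) = vᵀ L† v` is homogeneous of order `-1`
(`ρ_v(κL) = κ⁻¹ ρ_v(L)` for `κ > 0`) and monotone (`L1 ⪯ L2` implies
`ρ_v(L2) ≤ ρ_v(L1)`) on Laplacians of connected graphs. -/
theorem rho_v_homogeneous_monotone {n : ℕ} (v : Fin n → ℝ)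
    (hv : ¬ ∃ c : ℝ, v = fun _ => c)
    (L L1 L2 : Matrix (Fin n) (Fin n) ℝ)
    (hLsym : L.IsSymm) (hLpsd : L.PosSemidef)
    (hLone : L.mulVec (fun _ => 1) = 0)
    (hLker : ∀ x, L.mulVec x = 0 → ∃ c : ℝ, x = fun _ => c)
    (h1sym : L1.IsSymm) (h1psd : L1.PosSemidef)
    (h1one : L1.mulVec (fun _ => 1) = 0)
    (h1ker : ∀ x, L1.mulVec x = 0 → ∃ c : ℝ, x = fun _ => c)
    (h2sym : L2.IsSymm) (h2psd : L2.PosSemidef)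
    (h2one : L2.mulVec (fun _ => 1) = 0)
    (h2ker : ∀ x, L2.mulVec x = 0 → ∃ c : ℝ, x = fun _ => c)
    (Ld : Matrix (Fin n) (Fin n) ℝ) (hLd : IsMPInv L Ld)
    (κ : ℝ) (hκ : 0 < κ)
    (M : Matrix (Fin n) (Fin n) ℝ) (hM : IsMPInv (κ • L) M)
    (L1d L2d : Matrix (Fin n) (Fin n) ℝ)
    (hL1d : IsMPInv L1 L1d) (hL2d : IsMPInv L2 L2d)
    (hord : (L2 - L1).PosSemidef) :
    v ⬝ᵥ M.mulVec v = κ⁻¹ * (v ⬝ᵥ Ld.mulVec v) ∧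
    v ⬝ᵥ L2d.mulVec v ≤ v ⬝ᵥ L1d.mulVec v := by
  have hn : 0 < n := by
    rcases Nat.eq_zero_or_pos n with h | h
    · subst h
      exact absurd ⟨0, funext fun i => i.elim0⟩ hv
    · exact h
  have hκ0 : κ ≠ 0 := hκ.ne'
  constructor
  · -- homogeneity: κ⁻¹ • Ld is a MP inverse of κ • L
    obtain ⟨b1, b2, b3, b4⟩ := hLd
    have e1 : (κ • L) * (κ⁻¹ • Ld) = L * Ld := by
      rw [smul_mul_assoc, mul_smul_comm, smul_smul, mul_inv_cancel₀ hκ0, one_smul]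
    have e2 : (κ⁻¹ • Ld) * (κ • L) = Ld * L := by
      rw [smul_mul_assoc, mul_smul_comm, smul_smul, inv_mul_cancel₀ hκ0, one_smul]
    have hscale : IsMPInv (κ • L) (κ⁻¹ • Ld) := by
      refine ⟨?_, ?_, ?_, ?_⟩
      · rw [e1, mul_smul_comm, b1]
      · rw [e2, mul_smul_comm, b2]
      · rw [e1, b3]
      · rw [e2, b4]
    have hMeq : M = κ⁻¹ • Ld := mp_unique hM hscale
    rw [hMeq, smul_mulVec, dotProduct_smul]
    rfl
  · exact mp_mono hn L1 L2 L1d L2d h1sym h2sym h1psd h1one h2one h1ker hL1d hL2d hord v
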